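/- For every n = Σ_k 1_{A_k} n_k ∈ L⁰_t(ℕ) (with n_k ∈ ℕ and (A_k) ∈ Π_{𝓕_t}), the conditional Euclidean space with measurable dimension n, namely L⁰_t(ℝ)^n := {Σ_k 1_{A_k} x_k : x_k ∈ L⁰_t(ℝ^{n_k}) for all k} with d_{L⁰_t(ℝ)^n}(x,x̄) := Σ_k 1_{A_k} d_{L⁰_t(ℝ^{n_k})}(x_k, x̄_k), is an 𝓕_t-conditional metric space (in particular, d_{L⁰_t(ℝ)^n} is well defined and satisfies the concatenation property). -/

import Mathlib

open MeasureTheory Filter Topology Set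

namespace CondPaper

variable {Ω : Type*}

/-- A countable partition of `Ω` (up to `μ`-null sets) into `G`-measurable sets. -/
def IsCondPartition {_ : MeasurableSpace Ω} (μ : Measure Ω) (G : MeasurableSpace Ω)
    (A : ℕ → Set Ω) : Prop :=
  (∀ k, MeasurableSet[G] (A k)) ∧
    (∀ i j, i ≠ j → μ (A i ∩ A j) = 0) ∧ μ (⋃ k, A k)ᶜ = 0

/-- A `G`-conditional metric on a nonempty set `X` (Definition 2.1 of the paper). -/
structure CondMetric {_ : MeasurableSpace Ω} (μ : Measure Ω) (G : MeasurableSpace Ω)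
    (X : Type*) : Type _ where
  d : X → X → Ω → ℝ
  measurable_d : ∀ x y, Measurable[G] (d x y)
  nonneg : ∀ x y, ∀ᵐ ω ∂μ, 0 ≤ d x y ω
  eq_iff : ∀ x y, (d x y =ᵐ[μ] fun _ => (0 : ℝ)) ↔ x = y
  symm : ∀ x y, d x y =ᵐ[μ] d y x
  triangle : ∀ x y z, ∀ᵐ ω ∂μ, d x z ω ≤ d x y ω + d y z ω
  concat_spec : ∀ (A : ℕ → Set Ω), IsCondPartition μ G A → ∀ x : ℕ → X,
    ∃! x₀ : X, ∀ k, ∀ᵐ ω ∂μ, ω ∈ A k → d x₀ (x k) ω = 0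

namespace CondMetric

variable {m : MeasurableSpace Ω} {μ : Measure Ω} {G : MeasurableSpace Ω} {X Z : Type*}

/-- The concatenation `Σₖ 1_{A k} (x k)` along a partition. -/
noncomputable def concat (D : CondMetric μ G X) (A : ℕ → Set Ω)
    (hA : IsCondPartition μ G A) (x : ℕ → X) : X :=
  (D.concat_spec A hA x).choose

/-- Almost sure convergence `x n → x₀` in a conditional metric space. -/
def TendstoAE (D : CondMetric μ G X) (x : ℕ → X) (x₀ : X) : Prop :=
  ∀ᵐ ω ∂μ, Tendsto (fun n => D.d x₀ (x n) ω) atTop (nhds (0 : ℝ))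

lemma isCondPartition_level {n : Ω → ℕ} (hn : Measurable[G] n) (μ : @Measure Ω m) :
    IsCondPartition μ G fun j => {ω | n ω = j} := by
  refine ⟨fun j => hn (MeasurableSet.singleton j), ?_, ?_⟩
  · intro i j hij
    have h : {ω | n ω = i} ∩ {ω | n ω = j} = (∅ : Set Ω) := by
      ext ω
      simp only [Set.mem_inter_iff, Set.mem_setOf_eq, Set.mem_empty_iff_false, iff_false]
      rintro ⟨h1, h2⟩
      exact hij (h1 ▸ h2 ▸ rfl)
    simp [h]
  · have h : (⋃ j, {ω | n ω = j}) = (Set.univ : Set Ω) := by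
      ext ω; simp
    simp [h]

/-- Given a `G`-measurable index `n : Ω → ℕ`, the element `x_{n}` of the
"measurable subsequence", i.e. the concatenation of `(x j)` along `({n = j})_j`. -/
noncomputable def subseq (D : CondMetric μ G X) (x : ℕ → X) (n : Ω → ℕ)
    (hn : Measurable[G] n) : X :=
  D.concat (fun j => {ω | n ω = j}) (isCondPartition_level hn μ) x

end CondMetric

variable {m : MeasurableSpace Ω} {μ : Measure Ω} {G : MeasurableSpace Ω} {X Z : Type*}

/-- A strictly increasing sequence `n₁ < n₂ < ⋯` of `G`-measurable `ℕ`-valued random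
variables (indexing a measurable subsequence). -/
structure MIdx {_ : MeasurableSpace Ω} (μ : Measure Ω) (G : MeasurableSpace Ω) where
  n : ℕ → Ω → ℕ
  meas : ∀ k, Measurable[G] (n k)
  lt : ∀ k, ∀ᵐ ω ∂μ, n k ω < n (k + 1) ω

/-- A `G`-stable subset: nonempty and closed under countable concatenations. -/
def StableSet (D : CondMetric μ G X) (H : Set X) : Prop :=
  H.Nonempty ∧ ∀ (A : ℕ → Set Ω) (hA : IsCondPartition μ G A) (x : ℕ → X),
    (∀ k, x k ∈ H) → D.concat A hA x ∈ H

/-- A sequentially closed subset of a conditional metric space. -/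
def SeqClosedSet (D : CondMetric μ G X) (H : Set X) : Prop :=
  ∀ (x : ℕ → X) (x₀ : X), (∀ k, x k ∈ H) → D.TendstoAE x x₀ → x₀ ∈ H

/-- Conditional sequential compactness: every sequence has a measurable
subsequence converging a.s. to an element of `K`. -/
def CondSeqCompact (D : CondMetric μ G X) (K : Set X) : Prop :=
  ∀ z : ℕ → X, (∀ k, z k ∈ K) →
    ∃ (N : MIdx μ G) (z₀ : X), z₀ ∈ K ∧
      D.TendstoAE (fun k => D.subseq z (N.n k) (N.meas k)) z₀

/-- Condition (c1): nonempty control sets. -/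
def ControlC1 (Θ : X → Set Z) : Prop := ∀ x, (Θ x).Nonempty

/-- Condition (c2): `𝓕ₜ`-stability of the state-dependent control set. -/
def ControlC2 (DX : CondMetric μ G X) (DZ : CondMetric μ G Z) (Θ : X → Set Z) : Prop :=
  ∀ (A : ℕ → Set Ω) (hA : IsCondPartition μ G A) (x : ℕ → X),
    Θ (DX.concat A hA x) =
      {w | ∃ z : ℕ → Z, (∀ k, z k ∈ Θ (x k)) ∧ w = DZ.concat A hA z}

/-- Condition (c3): conditional sequential compactness of each control set. -/
def ControlC3 (DZ : CondMetric μ G Z) (Θ : X → Set Z) : Prop :=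
  ∀ x, CondSeqCompact DZ (Θ x)

/-- Condition (c4): conditional outer semi-continuity of the control set. -/
def ControlC4 (DX : CondMetric μ G X) (DZ : CondMetric μ G Z) (Θ : X → Set Z) : Prop :=
  ∀ (x : ℕ → X) (x₀ : X), DX.TendstoAE x x₀ → ∀ z : ℕ → Z, (∀ n, z n ∈ Θ (x n)) →
    ∃ (N : MIdx μ G) (z' : ℕ → Z), (∀ k, z' k ∈ Θ x₀) ∧
      ∀ᵐ ω ∂μ, Tendsto
        (fun k => DZ.d (DZ.subseq z (N.n k) (N.meas k)) (z' k) ω) atTop (nhds (0 : ℝ))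

/-- Membership in `L̲⁰(G)`: a `G`-measurable random variable with values in `ℝ ∪ {-∞}`. -/
def InLbar {_ : MeasurableSpace Ω} (μ : Measure Ω) (G : MeasurableSpace Ω)
    (y : Ω → EReal) : Prop :=
  Measurable[G] y ∧ ∀ᵐ ω ∂μ, y ω < ⊤

end CondPaper

namespace CondPaper

/-- Membership in the conditional Euclidean space `L⁰ₜ(ℝ)ⁿ` of measurable dimension
`n : Ω → ℕ`: componentwise `G`-measurable functions `f` with `f ω ∈ ℝ^{n ω} × {0}`,
i.e. vanishing components from index `n ω` on. (On each set `{n = nₖ}` such an `f` is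
exactly an element of `L⁰ₜ(ℝ^{nₖ})`.) -/
def MemCondRn {Ω : Type} (G : MeasurableSpace Ω) (n : Ω → ℕ) (f : Ω → ℕ → ℝ) : Prop :=
  (∀ j, Measurable[G] fun ω => f ω j) ∧ ∀ ω, ∀ j, n ω ≤ j → f ω j = 0


section CondRnAux

variable {Ω : Type} {m : MeasurableSpace Ω} {μ : Measure Ω} {G : MeasurableSpace Ω}

/-- The raw blockwise Euclidean distance on `L⁰ₜ(ℝ)ⁿ`. -/
noncomputable def dist0 (n : Ω → ℕ) (f g : Ω → ℕ → ℝ) : Ω → ℝ :=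
  fun ω => Real.sqrt (∑ j ∈ Finset.range (n ω), (f ω j - g ω j) ^ 2)

lemma measurable_comp_nat {β : Type*} [MeasurableSpace β] {n : Ω → ℕ}
    (hn : Measurable[G] n) {h : ℕ → Ω → β} (hh : ∀ k, Measurable[G] (h k)) :
    Measurable[G] fun ω => h (n ω) ω := by
  intro s hs
  have he : (fun ω => h (n ω) ω) ⁻¹' s = ⋃ k, {ω | n ω = k} ∩ (h k ⁻¹' s) := by
    ext ω
    simp only [Set.mem_preimage, Set.mem_iUnion, Set.mem_inter_iff, Set.mem_setOf_eq]
    constructor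
    · intro hω; exact ⟨n ω, rfl, hω⟩
    · rintro ⟨k, hk, hω⟩; rw [hk]; exact hω
  rw [he]
  exact MeasurableSet.iUnion fun k => (hn (MeasurableSet.singleton k)).inter (hh k hs)

lemma dist0_measurable {n : Ω → ℕ} (hn : Measurable[G] n) {f g : Ω → ℕ → ℝ}
    (hf : ∀ j, Measurable[G] fun ω => f ω j) (hg : ∀ j, Measurable[G] fun ω => g ω j) :
    Measurable[G] (dist0 n f g) := by
  have h : ∀ k : ℕ, Measurable[G] fun ω =>
      Real.sqrt (∑ j ∈ Finset.range k, (f ω j - g ω j) ^ 2) :=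
    fun k => (Finset.measurable_sum _ fun j _ => ((hf j).sub (hg j)).pow_const 2).sqrt
  exact measurable_comp_nat hn h

lemma dist0_symm (n : Ω → ℕ) (f g : Ω → ℕ → ℝ) (ω : Ω) : dist0 n f g ω = dist0 n g f ω := by
  unfold dist0; congr 1; apply Finset.sum_congr rfl; intro j _; ring

lemma dist0_congr {n : Ω → ℕ} {f g f' g' : Ω → ℕ → ℝ} {ω : Ω}
    (h1 : ∀ j, f ω j = f' ω j) (h2 : ∀ j, g ω j = g' ω j) :
    dist0 n f g ω = dist0 n f' g' ω := by
  unfold dist0; congr 1; apply Finset.sum_congr rfl; intro j _; rw [h1 j, h2 j]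

lemma dist0_eq_zero_iff {n : Ω → ℕ} {f g : Ω → ℕ → ℝ} (hf : MemCondRn G n f)
    (hg : MemCondRn G n g) {ω : Ω} : dist0 n f g ω = 0 ↔ ∀ j, f ω j = g ω j := by
  unfold dist0
  rw [Real.sqrt_eq_zero (Finset.sum_nonneg fun j _ => sq_nonneg _),
    Finset.sum_eq_zero_iff_of_nonneg fun j _ => sq_nonneg _]
  constructor
  · intro h j
    by_cases hj : j < n ω
    · have h0 := h j (Finset.mem_range.2 hj)
      exact sub_eq_zero.1 ((pow_eq_zero_iff two_ne_zero).1 h0)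
    · rw [hf.2 ω j (le_of_not_gt hj), hg.2 ω j (le_of_not_gt hj)]
  · intro h j _
    rw [h j]; ring

lemma sqrt_sum_sq_triangle (k : ℕ) (a b c : ℕ → ℝ) :
    Real.sqrt (∑ j ∈ Finset.range k, (a j - c j) ^ 2) ≤
      Real.sqrt (∑ j ∈ Finset.range k, (a j - b j) ^ 2) +
      Real.sqrt (∑ j ∈ Finset.range k, (b j - c j) ^ 2) := by
  have key : ∀ p q : ℕ → ℝ,
      Real.sqrt (∑ j ∈ Finset.range k, (p j - q j) ^ 2)
        = dist (α := EuclideanSpace ℝ (Fin k)) (WithLp.toLp 2 fun i => p i) (WithLp.toLp 2 fun i => q i) := by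
    intro p q
    rw [EuclideanSpace.dist_eq, ← Fin.sum_univ_eq_sum_range (fun j => (p j - q j) ^ 2) k]
    congr 1
    apply Finset.sum_congr rfl
    intro i _
    rw [Real.dist_eq, sq_abs]
  rw [key a c, key a b, key b c]
  exact dist_triangle _ _ _

lemma dist0_triangle (n : Ω → ℕ) (f g h : Ω → ℕ → ℝ) (ω : Ω) :
    dist0 n f h ω ≤ dist0 n f g ω + dist0 n g h ω :=
  sqrt_sum_sq_triangle (n ω) (f ω) (g ω) (h ω)

/-- The setoid of a.e. componentwise equality. -/
def condRnSetoid (μ : Measure Ω) (G : MeasurableSpace Ω) (n : Ω → ℕ) :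
    Setoid {f : Ω → ℕ → ℝ // MemCondRn G n f} where
  r f g := ∀ᵐ ω ∂μ, ∀ j, f.1 ω j = g.1 ω j
  iseqv := ⟨fun f => Filter.Eventually.of_forall fun ω j => rfl,
    fun h => h.mono fun ω hω j => (hω j).symm,
    fun h1 h2 => h1.mp (h2.mono fun ω h2' h1' j => (h1' j).trans (h2' j))⟩

/-- Extension of an a.e. partition to an everywhere-covering family. -/
def extPart (A : ℕ → Set Ω) : ℕ → Set Ω
  | 0 => A 0 ∪ (⋃ i, A i)ᶜ
  | (k + 1) => A (k + 1)

lemma extPart_measurable {A : ℕ → Set Ω} (hA : ∀ k, MeasurableSet[G] (A k)) (k : ℕ) :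
    MeasurableSet[G] (extPart A k) := by
  cases k with
  | zero => exact (hA 0).union (MeasurableSet.iUnion hA).compl
  | succ k => exact hA (k + 1)

lemma extPart_total (A : ℕ → Set Ω) (ω : Ω) : ∃ k, ω ∈ extPart A k := by
  by_cases h : ω ∈ ⋃ i, A i
  · obtain ⟨i, hi⟩ := Set.mem_iUnion.1 h
    cases i with
    | zero => exact ⟨0, Or.inl hi⟩
    | succ i => exact ⟨i + 1, hi⟩
  · exact ⟨0, Or.inr h⟩

/-- On the complement of the pairwise-intersection null set, the least index of
`extPart A` containing `ω` equals `k` whenever `ω ∈ A k`. -/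
lemma extPart_find_eq {A : ℕ → Set Ω} {ω : Ω} [∀ k, Decidable (ω ∈ extPart A k)]
    (hω : ω ∉ ⋃ i, ⋃ j, ⋃ _ : i ≠ j, A i ∩ A j) {k : ℕ} (hk : ω ∈ A k) :
    Nat.find (extPart_total A ω) = k := by
  set i := Nat.find (extPart_total A ω) with hi_def
  have hi : ω ∈ extPart A i := Nat.find_spec (extPart_total A ω)
  by_contra hne
  have hiA : ω ∈ A i := by
    cases hi' : i with
    | zero =>
      rw [hi'] at hi
      rcases hi with h | h
      · exact h
      · exact absurd (Set.mem_iUnion.2 ⟨k, hk⟩) h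
    | succ j =>
      rw [hi'] at hi
      exact hi
  exact hω (Set.mem_iUnion.2 ⟨i, Set.mem_iUnion.2 ⟨k, Set.mem_iUnion.2 ⟨hne, hiA, hk⟩⟩⟩)

lemma exists_glue {n : Ω → ℕ} (A : ℕ → Set Ω) (hA : IsCondPartition μ G A)
    (fk : ℕ → {f : Ω → ℕ → ℝ // MemCondRn G n f}) :
    ∃ f₀ : {f : Ω → ℕ → ℝ // MemCondRn G n f},
      ∀ k, ∀ᵐ ω ∂μ, ω ∈ A k → ∀ j, f₀.1 ω j = (fk k).1 ω j := by
  classical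
  refine ⟨⟨fun ω j => (fk (Nat.find (extPart_total A ω))).1 ω j, ?_, ?_⟩, ?_⟩
  · intro j
    exact Measurable.find (f := fun k ω => (fk k).1 ω j) (p := fun k ω => ω ∈ extPart A k)
      (fun k => (fk k).2.1 j) (fun k => extPart_measurable hA.1 k) (extPart_total A)
  · intro ω j hj
    exact (fk _).2.2 ω j hj
  · intro k
    have hN : μ (⋃ i, ⋃ j, ⋃ _ : i ≠ j, A i ∩ A j) = 0 :=
      measure_iUnion_null fun i => measure_iUnion_null fun j =>
        measure_iUnion_null fun hij => hA.2.1 i j hij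
    filter_upwards [measure_eq_zero_iff_ae_notMem.1 hN] with ω hω hk j
    rw [extPart_find_eq hω hk]

end CondRnAux

/-- **Example 2.6.2 (conditional Euclidean space with measurable dimension).** For every
`𝓕ₜ`-measurable dimension `n = Σₖ 1_{Aₖ} nₖ ∈ L⁰ₜ(ℕ)`, the space
`L⁰ₜ(ℝ)ⁿ = {Σₖ 1_{Aₖ} xₖ : xₖ ∈ L⁰ₜ(ℝ^{nₖ})}` with the blockwise Euclidean metric
`d(x,x̄) = Σₖ 1_{Aₖ} d_{L⁰ₜ(ℝ^{nₖ})}(xₖ,x̄ₖ)` is an `𝓕ₜ`-conditional metric space. -/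
theorem condRn_condMetric {Ω : Type} {m : MeasurableSpace Ω} {μ : Measure Ω}
    [IsProbabilityMeasure μ] {G : MeasurableSpace Ω} (hG : G ≤ m)
    (n : Ω → ℕ) (hn : Measurable[G] n) :
    ∃ (Xq : Type) (q : {f : Ω → ℕ → ℝ // MemCondRn G n f} → Xq)
      (D : CondMetric μ G Xq),
      Function.Surjective q ∧
      (∀ f g, q f = q g ↔ ∀ᵐ ω ∂μ, ∀ j, f.1 ω j = g.1 ω j) ∧
      -- the conditional metric is the Euclidean distance in ℝ^{n ω}
      (∀ f g, D.d (q f) (q g) =ᵐ[μ] fun ω =>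
        Real.sqrt (∑ j ∈ Finset.range (n ω), (f.1 ω j - g.1 ω j) ^ 2)) ∧
      -- concatenations exist and are computed by a.e. gluing
      ∀ (A : ℕ → Set Ω) (hA : IsCondPartition μ G A)
        (fk : ℕ → {f : Ω → ℕ → ℝ // MemCondRn G n f}),
        (∃ f₀ : {f : Ω → ℕ → ℝ // MemCondRn G n f},
          ∀ k, ∀ᵐ ω ∂μ, ω ∈ A k → ∀ j, f₀.1 ω j = (fk k).1 ω j) ∧
        ∀ f₀ : {f : Ω → ℕ → ℝ // MemCondRn G n f},
          (∀ k, ∀ᵐ ω ∂μ, ω ∈ A k → ∀ j, f₀.1 ω j = (fk k).1 ω j) →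
          D.concat A hA (fun k => q (fk k)) = q f₀ := by
  classical
  let s := condRnSetoid μ G n
  have hout : ∀ f : {f : Ω → ℕ → ℝ // MemCondRn G n f},
      ∀ᵐ ω ∂μ, ∀ j, ((Quotient.mk s f).out).1 ω j = f.1 ω j :=
    fun f => Quotient.mk_out (s := s) f
  let dd : Quotient s → Quotient s → Ω → ℝ := fun x y => dist0 n x.out.1 y.out.1
  have hdd_zero_iff : ∀ (x y : Quotient s) (ω : Ω),
      dd x y ω = 0 ↔ ∀ j, x.out.1 ω j = y.out.1 ω j :=
    fun x y ω => dist0_eq_zero_iff x.out.2 y.out.2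
  have heq_of_ae : ∀ x y : Quotient s,
      (∀ᵐ ω ∂μ, ∀ j, x.out.1 ω j = y.out.1 ω j) → x = y := by
    intro x y h
    calc x = Quotient.mk s x.out := (Quotient.out_eq x).symm
    _ = Quotient.mk s y.out := Quotient.sound h
    _ = y := Quotient.out_eq y
  have hP_glue : ∀ (A : ℕ → Set Ω) (fk : ℕ → {f : Ω → ℕ → ℝ // MemCondRn G n f})
      (f₀ : {f : Ω → ℕ → ℝ // MemCondRn G n f}),
      (∀ k, ∀ᵐ ω ∂μ, ω ∈ A k → ∀ j, f₀.1 ω j = (fk k).1 ω j) →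
      ∀ k, ∀ᵐ ω ∂μ, ω ∈ A k → dd (Quotient.mk s f₀) (Quotient.mk s (fk k)) ω = 0 := by
    intro A fk f₀ hf k
    filter_upwards [hf k, hout f₀, hout (fk k)] with ω h1 h2 h3 hk
    refine (hdd_zero_iff _ _ ω).2 fun j => ?_
    rw [h2 j, h3 j, h1 hk j]
  have hconcat : ∀ (A : ℕ → Set Ω), IsCondPartition μ G A → ∀ x : ℕ → Quotient s,
      ∃! x₀ : Quotient s, ∀ k, ∀ᵐ ω ∂μ, ω ∈ A k → dd x₀ (x k) ω = 0 := by
    intro A hA x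
    obtain ⟨f₀, hf₀⟩ := exists_glue (n := n) A hA (fun k => (x k).out)
    have hcov : ∀ᵐ ω ∂μ, ∃ k, ω ∈ A k := by
      filter_upwards [measure_eq_zero_iff_ae_notMem.1 hA.2.2] with ω hω
      exact Set.mem_iUnion.1 (Set.notMem_compl_iff.1 hω)
    have hP : ∀ k, ∀ᵐ ω ∂μ, ω ∈ A k → dd (Quotient.mk s f₀) (x k) ω = 0 := by
      intro k
      have h := hP_glue A (fun k => (x k).out) f₀ hf₀ k
      rwa [Quotient.out_eq] at h
    refine ⟨Quotient.mk s f₀, hP, ?_⟩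
    intro y hy
    apply heq_of_ae
    have hall : ∀ᵐ ω ∂μ, ∀ k, ω ∈ A k →
        ∀ j, y.out.1 ω j = (Quotient.mk s f₀).out.1 ω j := by
      rw [ae_all_iff]
      intro k
      filter_upwards [hy k, hP k] with ω h1 h2 hk j
      have e1 := (hdd_zero_iff y (x k) ω).1 (h1 hk) j
      have e2 := (hdd_zero_iff (Quotient.mk s f₀) (x k) ω).1 (h2 hk) j
      rw [e1, e2]
    filter_upwards [hall, hcov] with ω h1 h2
    obtain ⟨k, hk⟩ := h2
    exact h1 k hk
  let D : CondMetric μ G (Quotient s) :=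
    { d := dd
      measurable_d := fun x y => dist0_measurable hn x.out.2.1 y.out.2.1
      nonneg := fun x y => Filter.Eventually.of_forall fun ω => Real.sqrt_nonneg _
      eq_iff := by
        intro x y
        constructor
        · intro h
          exact heq_of_ae x y (h.mono fun ω hω => (hdd_zero_iff x y ω).1 hω)
        · rintro rfl
          exact Filter.Eventually.of_forall fun ω => (hdd_zero_iff x x ω).2 fun j => rfl
      symm := fun x y => Filter.Eventually.of_forall fun ω => dist0_symm n _ _ ω
      triangle := fun x y z => Filter.Eventually.of_forall fun ω => dist0_triangle n _ _ _ ω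
      concat_spec := hconcat }
  refine ⟨Quotient s, Quotient.mk s, D, ?_, ?_, ?_, ?_⟩
  · exact fun x => ⟨x.out, Quotient.out_eq x⟩
  · intro f g
    exact ⟨fun h => Quotient.exact h, fun h => Quotient.sound h⟩
  · intro f g
    filter_upwards [hout f, hout g] with ω h1 h2
    exact dist0_congr h1 h2
  · intro A hA fk
    refine ⟨exists_glue (n := n) A hA fk, ?_⟩
    intro f₀ hf₀
    exact ((D.concat_spec A hA fun k => Quotient.mk s (fk k)).choose_spec.2 _
      (hP_glue A fk f₀ hf₀)).symm


end CondPaper
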